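/- Let p ≥ 1 and ℓ₁,…,ℓ_p ≥ 0 be integers with ℓ = ℓ₁+⋯+ℓ_p ≥ 1, let b₀ ≥ 1, w₀ ≥ 0 be integers, s₀ = b₀+w₀, and δ = p/(p+ℓ). Let X be a random variable with law GenGammaProd([ℓ₁,…,ℓ_p]; b₀, w₀), so that for every integer r ≥ 1, E[X^r] = (Γ(b₀+r)Γ(s₀)/(Γ(b₀)Γ(s₀+r))) · ∏_{i∈I} Γ((s₀+i+r)/(p+ℓ))/Γ((s₀+i)/(p+ℓ)), where I = {1,…,p+ℓ−1} \ {ℓ₁+⋯+ℓ_j + j : 1 ≤ j ≤ p−1}. Fix β > −δ and let M_r = Γ(β+1)Γ(β/δ + r + 1)/(Γ(β/δ+1)Γ(β+δr+1)) be the r-th moment of the Mittag-Leffler distribution ML(δ, β). Then (1/r)·log( E[X^r] / ((δ·p^{δ−1})^r · M_r) ) → 0 as r → ∞, i.e. X and δ·p^{δ−1}·Y have similar tails for Y distributed as ML(δ, β). -/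

import Mathlib

open Filter Topology Real

open scoped Classical

/-- For a periodic pattern given by `L : ℕ → ℕ` (so `ℓ_j = L (j-1)` for `j = 1, …, p`),
the set of indices `i ∈ {1, …, p+ℓ-1}` which are *not* of the form
`ℓ₁ + ⋯ + ℓ_j + j` with `1 ≤ j ≤ p-1`, where `ℓ = ℓ₁ + ⋯ + ℓ_p`. -/
noncomputable def ggIndexSet (L : ℕ → ℕ) (p : ℕ) : Finset ℕ :=
  (Finset.Icc 1 (p + (∑ k ∈ Finset.range p, L k) - 1)).filter
    (fun i => ¬ ∃ j ∈ Finset.Icc 1 (p - 1), i = (∑ k ∈ Finset.range j, L k) + j)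

/-- The `r`-th moment of `GenGammaProd([ℓ₁,…,ℓ_p]; b₀, w₀)` (with `s₀ = b₀ + w₀`):
`E[X^r] = (Γ(b₀+r)Γ(s₀)/(Γ(b₀)Γ(s₀+r))) ∏_{i∈I} Γ((s₀+i+r)/(p+ℓ))/Γ((s₀+i)/(p+ℓ))`. -/
noncomputable def ggProdMoment (L : ℕ → ℕ) (p b₀ w₀ : ℕ) (r : ℕ) : ℝ :=
  Real.Gamma ((b₀ : ℝ) + (r : ℝ)) * Real.Gamma ((b₀ + w₀ : ℕ) : ℝ) /
      (Real.Gamma (b₀ : ℝ) * Real.Gamma (((b₀ + w₀ : ℕ) : ℝ) + (r : ℝ))) *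
    ∏ i ∈ ggIndexSet L p,
      Real.Gamma ((((b₀ + w₀ : ℕ) : ℝ) + (i : ℝ) + (r : ℝ)) /
          ((p : ℝ) + ((∑ k ∈ Finset.range p, L k : ℕ) : ℝ))) /
        Real.Gamma ((((b₀ + w₀ : ℕ) : ℝ) + (i : ℝ)) /
          ((p : ℝ) + ((∑ k ∈ Finset.range p, L k : ℕ) : ℝ)))

/-- The `r`-th moment of the Mittag-Leffler distribution `ML(δ, β)`:
`M_r = Γ(β+1)Γ(β/δ+r+1)/(Γ(β/δ+1)Γ(β+δr+1))`. -/
noncomputable def mittagLefflerMoment (δ β : ℝ) (r : ℕ) : ℝ :=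
  Real.Gamma (β + 1) * Real.Gamma (β / δ + (r : ℝ) + 1) /
    (Real.Gamma (β / δ + 1) * Real.Gamma (β + δ * (r : ℝ) + 1))

lemma tendsto_log_div_nat : Tendsto (fun n : ℕ => Real.log n / n) atTop (𝓝 0) := by
  have := (Real.isLittleO_log_id_atTop.tendsto_div_nhds_zero).comp
    (tendsto_natCast_atTop_atTop (R := ℝ))
  simpa [Function.comp_def] using this

lemma tendsto_log_factorial :
    Tendsto (fun m : ℕ => (Real.log (m.factorial) - ((m:ℝ) * Real.log m - m)) / m)
      atTop (𝓝 0) := by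
  have hπ : (0:ℝ) < Real.sqrt π := Real.sqrt_pos.2 Real.pi_pos
  have h1 : Tendsto (fun m : ℕ => Real.log (Stirling.stirlingSeq m)) atTop
      (𝓝 (Real.log (Real.sqrt π))) :=
    ((Real.continuousAt_log hπ.ne').tendsto).comp Stirling.tendsto_stirlingSeq_sqrt_pi
  have h2 : Tendsto (fun m : ℕ => Real.log (Stirling.stirlingSeq m) / m) atTop (𝓝 0) :=
    h1.div_atTop tendsto_natCast_atTop_atTop
  have h3 : Tendsto (fun m : ℕ => (Real.log 2 + Real.log m) * (1/2) / m) atTop (𝓝 0) := by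
    have hc : Tendsto (fun m : ℕ => (Real.log 2 * (1/2)) / m) atTop (𝓝 0) :=
      tendsto_const_nhds.div_atTop tendsto_natCast_atTop_atTop
    have hd := tendsto_log_div_nat.const_mul (1/2 : ℝ)
    have := hc.add hd
    simp only [mul_zero, add_zero, zero_add] at this
    apply this.congr
    intro m
    ring
  have h4 := h2.add h3
  rw [add_zero] at h4
  apply h4.congr'
  filter_upwards [eventually_ge_atTop 1] with m hm
  have hm0 : (0:ℝ) < m := by exact_mod_cast hm
  have hf := Stirling.log_stirlingSeq_formula m
  have hlog2m : Real.log (2*m) = Real.log 2 + Real.log m := Real.log_mul (by norm_num) hm0.ne'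
  have hlogme : Real.log ((m:ℝ) / Real.exp 1) = Real.log m - 1 := by
    rw [Real.log_div hm0.ne' (Real.exp_ne_zero 1), Real.log_exp]
  rw [← add_div]
  congr 1
  rw [hf, hlog2m, hlogme]
  ring

lemma phi_monotoneOn : MonotoneOn (fun t : ℝ => t * Real.log t - t) (Set.Ici 1) := by
  have hd : ∀ x ∈ interior (Set.Ici (1:ℝ)),
      HasDerivAt (fun t : ℝ => t * Real.log t - t) (Real.log x) x := by
    intro x hx
    rw [interior_Ici, Set.mem_Ioi] at hx
    have h1 : HasDerivAt (fun t : ℝ => t * Real.log t) (Real.log x + 1) x :=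
      Real.hasDerivAt_mul_log (by positivity)
    have h2 : HasDerivAt (fun t : ℝ => t * Real.log t - t) (Real.log x + 1 - 1) x := h1.sub (hasDerivAt_id x)
    simpa using h2
  apply monotoneOn_of_deriv_nonneg (convex_Ici 1)
  · apply ContinuousOn.sub _ continuousOn_id
    exact continuousOn_id.mul (Real.continuousOn_log.mono (by
      intro x hx
      simp only [Set.mem_compl_iff, Set.mem_singleton_iff]
      intro h
      rw [h] at hx
      simp at hx
      linarith))
  · exact fun x hx => ((hd x hx).differentiableAt).differentiableWithinAt
  · intro x hx
    rw [(hd x hx).deriv]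
    rw [interior_Ici, Set.mem_Ioi] at hx
    exact Real.log_nonneg hx.le

lemma tendsto_log_add_one_div : Tendsto (fun x : ℝ => Real.log (x+1) / x) atTop (𝓝 0) := by
  have ha : Tendsto (fun x : ℝ => Real.log (x+1) / (x+1)) atTop (𝓝 0) := by
    have := (Real.isLittleO_log_id_atTop.tendsto_div_nhds_zero).comp
      (tendsto_atTop_add_const_right atTop (1:ℝ) tendsto_id)
    simpa [Function.comp_def] using this
  have hb : Tendsto (fun x : ℝ => (x+1) / x) atTop (𝓝 1) := by
    have h1 : Tendsto (fun x : ℝ => 1 + x⁻¹) atTop (𝓝 1) := by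
      simpa using (tendsto_const_nhds : Tendsto (fun _ : ℝ => (1:ℝ)) atTop (𝓝 1)).add tendsto_inv_atTop_zero
    apply h1.congr'
    filter_upwards [eventually_gt_atTop 0] with x hx
    field_simp
  have := ha.mul hb
  rw [zero_mul] at this
  apply this.congr'
  filter_upwards [eventually_gt_atTop 0] with x hx
  rw [div_mul_div_comm, mul_comm (Real.log (x+1)) (x+1), mul_div_mul_left _ _ (by linarith)]

lemma tendsto_log_Gamma :
    Tendsto (fun x : ℝ => (Real.log (Real.Gamma x) - (x * Real.log x - x)) / x)
      atTop (𝓝 0) := by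
  have h1 : Tendsto (fun x : ℝ =>
      (Real.log ((⌊x⌋₊).factorial) - ((⌊x⌋₊:ℝ) * Real.log ⌊x⌋₊ - ⌊x⌋₊)) / ⌊x⌋₊)
      atTop (𝓝 0) := by
    have := tendsto_log_factorial.comp (tendsto_nat_floor_atTop (α := ℝ))
    simpa [Function.comp_def] using this
  have h2 : Tendsto (fun x : ℝ => ((⌊x⌋₊:ℝ)/x)) atTop (𝓝 1) := tendsto_nat_floor_div_atTop
  have hU : Tendsto (fun x : ℝ =>
      ((Real.log ((⌊x⌋₊).factorial) - ((⌊x⌋₊:ℝ) * Real.log ⌊x⌋₊ - ⌊x⌋₊)) / ⌊x⌋₊)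
        * ((⌊x⌋₊:ℝ)/x)) atTop (𝓝 0) := by
    simpa using h1.mul h2
  have hL : Tendsto (fun x : ℝ =>
      ((Real.log ((⌊x⌋₊).factorial) - ((⌊x⌋₊:ℝ) * Real.log ⌊x⌋₊ - ⌊x⌋₊)) / ⌊x⌋₊)
        * ((⌊x⌋₊:ℝ)/x) - 2 * (Real.log (x+1) / x)) atTop (𝓝 0) := by
    simpa using hU.sub ((tendsto_log_add_one_div).const_mul 2)
  apply tendsto_of_tendsto_of_tendsto_of_le_of_le' hL hU
  · -- lower bound eventually
    filter_upwards [eventually_ge_atTop (2:ℝ)] with x hx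
    set m := ⌊x⌋₊ with hm
    have hx0 : (0:ℝ) < x := by linarith
    have hm2 : 2 ≤ m := Nat.le_floor (by exact_mod_cast hx)
    have hm0 : (0:ℝ) < m := by exact_mod_cast Nat.lt_of_lt_of_le (by norm_num) hm2
    have hmx : (m:ℝ) ≤ x := Nat.floor_le hx0.le
    have hxm1 : x < m + 1 := Nat.lt_floor_add_one x
    have hΓpos : 0 < Real.Gamma x := Real.Gamma_pos_of_pos hx0
    -- Gamma m = (m-1)!
    have hΓm : Real.Gamma (m:ℝ) = (m-1).factorial := by
      have := Real.Gamma_nat_eq_factorial (m-1)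
      rw [← this]
      congr 1
      have : ((m-1 : ℕ):ℝ) = (m:ℝ) - 1 := by
        have : (1:ℕ) ≤ m := by omega
        push_cast [Nat.cast_sub this]
        ring
      rw [this]; ring
    have hmono := Real.Gamma_strictMonoOn_Ici.monotoneOn
    have hlow : Real.log ((m-1).factorial) ≤ Real.log (Real.Gamma x) := by
      apply Real.log_le_log (by rw [← hΓm]; exact Real.Gamma_pos_of_pos hm0)
      rw [← hΓm]
      exact hmono (by simpa using by exact_mod_cast hm2) (Set.mem_Ici.2 hx) hmx
    -- log (m-1)! = log m! - log m
    have hfac : (m:ℝ) * (m-1).factorial = m.factorial := by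
      have := Nat.mul_factorial_pred (by omega : m ≠ 0)
      exact_mod_cast this
    have hfacpos : (0:ℝ) < (m-1).factorial := by exact_mod_cast (m-1).factorial_pos
    have hlogfac : Real.log ((m-1).factorial) = Real.log (m.factorial) - Real.log m := by
      rw [← hfac, Real.log_mul hm0.ne' hfacpos.ne']; ring
    -- φ x ≤ φ (m+1) ≤ φ m + log (m+1)
    have hφ1 : x * Real.log x - x ≤ ((m:ℝ)+1) * Real.log ((m:ℝ)+1) - ((m:ℝ)+1) :=
      phi_monotoneOn (Set.mem_Ici.2 (by linarith)) (Set.mem_Ici.2 (by linarith)) hxm1.le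
    have hφ2 : ((m:ℝ)+1) * Real.log ((m:ℝ)+1) - ((m:ℝ)+1) ≤
        ((m:ℝ) * Real.log m - m) + Real.log ((m:ℝ)+1) := by
      have hkey : Real.log ((m:ℝ)+1) - Real.log m ≤ 1/(m:ℝ) := by
        have h := Real.log_le_sub_one_of_pos (x := ((m:ℝ)+1)/m) (by positivity)
        rw [Real.log_div (by linarith) hm0.ne'] at h
        have : ((m:ℝ)+1)/m - 1 = 1/m := by field_simp; ring
        linarith
      have : (m:ℝ) * (Real.log ((m:ℝ)+1) - Real.log m) ≤ 1 := by
        calc (m:ℝ) * (Real.log ((m:ℝ)+1) - Real.log m) ≤ (m:ℝ) * (1/m) :=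
              mul_le_mul_of_nonneg_left hkey hm0.le
          _ = 1 := by field_simp
      nlinarith [this]
    -- log m ≤ log (x+1), log(m+1) ≤ log(x+1)
    have hlm : Real.log m ≤ Real.log (x+1) := Real.log_le_log hm0 (by linarith)
    have hlm1 : Real.log ((m:ℝ)+1) ≤ Real.log (x+1) := Real.log_le_log (by linarith) (by linarith)
    -- numerator lower bound
    have hnum : (Real.log (m.factorial) - ((m:ℝ) * Real.log m - m)) - 2 * Real.log (x+1)
        ≤ Real.log (Real.Gamma x) - (x * Real.log x - x) := by
      have := hlow
      rw [hlogfac] at this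
      linarith
    -- divide by x
    have hrw : ((Real.log (m.factorial) - ((m:ℝ) * Real.log m - m)) / m) * ((m:ℝ)/x)
        = (Real.log (m.factorial) - ((m:ℝ) * Real.log m - m)) / x := by
      rw [div_mul_div_comm, mul_comm ((m:ℝ)) x, mul_div_mul_right _ _ hm0.ne']
    calc ((Real.log (m.factorial) - ((m:ℝ) * Real.log m - m)) / m) * ((m:ℝ)/x)
          - 2 * (Real.log (x+1) / x)
        = ((Real.log (m.factorial) - ((m:ℝ) * Real.log m - m)) - 2 * Real.log (x+1)) / x := by
          rw [hrw]; ring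
      _ ≤ (Real.log (Real.Gamma x) - (x * Real.log x - x)) / x :=
          div_le_div_of_nonneg_right hnum hx0.le
  · -- upper bound eventually
    filter_upwards [eventually_ge_atTop (2:ℝ)] with x hx
    set m := ⌊x⌋₊ with hm
    have hx0 : (0:ℝ) < x := by linarith
    have hm2 : 2 ≤ m := Nat.le_floor (by exact_mod_cast hx)
    have hm0 : (0:ℝ) < m := by exact_mod_cast Nat.lt_of_lt_of_le (by norm_num) hm2
    have hmx : (m:ℝ) ≤ x := Nat.floor_le hx0.le
    have hxm1 : x < m + 1 := Nat.lt_floor_add_one x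
    have hΓpos : 0 < Real.Gamma x := Real.Gamma_pos_of_pos hx0
    have hmono := Real.Gamma_strictMonoOn_Ici.monotoneOn
    have hup : Real.log (Real.Gamma x) ≤ Real.log (m.factorial) := by
      apply Real.log_le_log hΓpos
      rw [← Real.Gamma_nat_eq_factorial m]
      exact hmono (Set.mem_Ici.2 hx) (Set.mem_Ici.2 (by linarith)) hxm1.le
    have hφ : (m:ℝ) * Real.log m - m ≤ x * Real.log x - x :=
      phi_monotoneOn (Set.mem_Ici.2 (by linarith)) (Set.mem_Ici.2 (by linarith)) hmx
    have hnum : Real.log (Real.Gamma x) - (x * Real.log x - x)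
        ≤ Real.log (m.factorial) - ((m:ℝ) * Real.log m - m) := by linarith
    have hrw : ((Real.log (m.factorial) - ((m:ℝ) * Real.log m - m)) / m) * ((m:ℝ)/x)
        = (Real.log (m.factorial) - ((m:ℝ) * Real.log m - m)) / x := by
      rw [div_mul_div_comm, mul_comm ((m:ℝ)) x, mul_div_mul_right _ _ hm0.ne']
    rw [hrw]
    exact div_le_div_of_nonneg_right hnum hx0.le

lemma tendsto_gerr (c a : ℝ) (hc : 0 < c) :
    Tendsto (fun r : ℕ =>
      (Real.log (Real.Gamma (c*r + a)) - c*r*Real.log r - c*(Real.log c - 1)*r) / r)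
      atTop (𝓝 0) := by
  have hB : Tendsto (fun r : ℕ => a / r) atTop (𝓝 0) :=
    tendsto_const_nhds.div_atTop tendsto_natCast_atTop_atTop
  have hcaB : Tendsto (fun r : ℕ => c + a / r) atTop (𝓝 c) := by
    simpa using (tendsto_const_nhds : Tendsto (fun _ : ℕ => c) atTop (𝓝 c)).add hB
  have hpos : ∀ᶠ r : ℕ in atTop, 0 < c + a / r := hcaB.eventually (eventually_gt_nhds hc)
  have hx : Tendsto (fun r : ℕ => c*r + a) atTop atTop := by
    apply tendsto_atTop_add_const_right
    exact Tendsto.const_mul_atTop hc tendsto_natCast_atTop_atTop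
  have h1 : Tendsto (fun r : ℕ => (c*r + a)/r) atTop (𝓝 c) := by
    apply hcaB.congr'
    filter_upwards [eventually_ge_atTop 1] with r hr
    have hr0 : (0:ℝ) < r := by exact_mod_cast hr
    field_simp
  have h0 := tendsto_log_Gamma.comp hx
  have h2 := h0.mul h1
  rw [zero_mul] at h2
  have h3 : Tendsto (fun r : ℕ =>
      (Real.log (Real.Gamma (c*r+a)) - ((c*r+a)*Real.log (c*r+a) - (c*r+a))) / r)
      atTop (𝓝 0) := by
    apply h2.congr'
    filter_upwards [hx.eventually (eventually_gt_atTop 0), eventually_ge_atTop 1] with r hxr hr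
    simp only [Function.comp]
    rw [div_mul_div_comm, mul_comm (c*↑r+a) (↑r:ℝ), mul_div_mul_right _ _ hxr.ne']
  -- polynomial part
  have hA := tendsto_log_div_nat
  have hC : Tendsto (fun r : ℕ => Real.log (c + a/r)) atTop (𝓝 (Real.log c)) :=
    ((Real.continuousAt_log hc.ne').tendsto).comp hcaB
  have h4' : Tendsto (fun r : ℕ =>
      a*(Real.log r/r) + ((c*r+a)/r)*Real.log (c+a/r) - c*Real.log c - a/r)
      atTop (𝓝 0) := by
    have := (((hA.const_mul a).add (h1.mul hC)).sub
      (tendsto_const_nhds : Tendsto (fun _ : ℕ => c*Real.log c) atTop (𝓝 (c*Real.log c)))).sub hB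
    simpa using this
  have h4 : Tendsto (fun r : ℕ =>
      ((c*r+a)*Real.log (c*r+a) - (c*r+a) - c*r*Real.log r - c*(Real.log c - 1)*r) / r)
      atTop (𝓝 0) := by
    apply h4'.congr'
    filter_upwards [hpos, eventually_ge_atTop 1] with r hrpos hr
    have hr0 : (0:ℝ) < r := by exact_mod_cast hr
    have hsplit : Real.log (c*r + a) = Real.log r + Real.log (c + a/r) := by
      have : c*r + a = r * (c + a/r) := by field_simp
      rw [this, Real.log_mul hr0.ne' hrpos.ne']
    rw [hsplit]
    field_simp
    ring
  have := h3.add h4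
  rw [add_zero] at this
  apply this.congr
  intro r
  rw [← add_div]
  congr 1
  ring

lemma card_ggIndexSet (L : ℕ → ℕ) (p : ℕ) (hp : 1 ≤ p) :
    (ggIndexSet L p).card = ∑ k ∈ Finset.range p, L k := by
  classical
  set ℓ := ∑ k ∈ Finset.range p, L k with hℓ
  have hmono : StrictMono (fun j => (∑ k ∈ Finset.range j, L k) + j) := by
    intro a b hab
    have h1 : ∑ k ∈ Finset.range a, L k ≤ ∑ k ∈ Finset.range b, L k :=
      Finset.sum_le_sum_of_subset (Finset.range_subset_range.2 hab.le)
    simpa using by omega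
  have hsum : ∀ j, j ≤ p → ∑ k ∈ Finset.range j, L k ≤ ℓ := fun j hj =>
    Finset.sum_le_sum_of_subset (Finset.range_subset_range.2 hj)
  have key : (Finset.Icc 1 (p + ℓ - 1)).filter
      (fun i => ∃ j ∈ Finset.Icc 1 (p - 1), i = (∑ k ∈ Finset.range j, L k) + j)
      = (Finset.Icc 1 (p - 1)).image (fun j => (∑ k ∈ Finset.range j, L k) + j) := by
    ext i
    simp only [Finset.mem_filter, Finset.mem_image, Finset.mem_Icc]
    constructor
    · rintro ⟨-, j, hj, rfl⟩
      exact ⟨j, hj, rfl⟩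
    · rintro ⟨j, ⟨hj1, hj2⟩, rfl⟩
      have h2 := hsum j (by omega)
      exact ⟨⟨by omega, by omega⟩, j, ⟨hj1, hj2⟩, rfl⟩
  have hcard1 : ((Finset.Icc 1 (p + ℓ - 1)).filter
      (fun i => ∃ j ∈ Finset.Icc 1 (p - 1), i = (∑ k ∈ Finset.range j, L k) + j)).card
      = p - 1 := by
    rw [key, Finset.card_image_of_injective _ hmono.injective, Nat.card_Icc]
    omega
  have hsplit : ggIndexSet L p = (Finset.Icc 1 (p + ℓ - 1)) \
      ((Finset.Icc 1 (p + ℓ - 1)).filter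
        (fun i => ∃ j ∈ Finset.Icc 1 (p - 1), i = (∑ k ∈ Finset.range j, L k) + j)) := by
    ext i
    simp only [ggIndexSet, Finset.mem_filter, Finset.mem_sdiff, hℓ]
    aesop
  rw [hsplit, Finset.card_sdiff_of_subset (by intro x hx; simp only [Finset.mem_filter] at hx; exact hx.1), hcard1, Nat.card_Icc]
  omega

/-- **Theorem (similarity with the tail of a Mittag-Leffler distribution).**
Let `X` have law `GenGammaProd([ℓ₁,…,ℓ_p]; b₀, w₀)`, `ℓ = ℓ₁+⋯+ℓ_p ≥ 1`,
`δ = p/(p+ℓ)`, and let `Y` have the Mittag-Leffler distribution `ML(δ, β)` for any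
`β > -δ`.  Then `X` and `δ p^{δ-1} Y` have similar tails:
`(1/r) log(E[X^r]/E[(δ p^{δ-1} Y)^r]) → 0` as `r → ∞`. -/
theorem genGammaProd_similar_tails_mittagLeffler
    (p : ℕ) (hp : 1 ≤ p) (L : ℕ → ℕ) (hl : 1 ≤ ∑ k ∈ Finset.range p, L k)
    (b₀ w₀ : ℕ) (hb : 1 ≤ b₀) (β : ℝ)
    (hβ : -((p : ℝ) / ((p : ℝ) + ((∑ k ∈ Finset.range p, L k : ℕ) : ℝ))) < β) :
    Tendsto
      (fun r : ℕ =>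
        (1 / (r : ℝ)) *
          Real.log (ggProdMoment L p b₀ w₀ r /
            (((p : ℝ) / ((p : ℝ) + ((∑ k ∈ Finset.range p, L k : ℕ) : ℝ)) *
                  (p : ℝ) ^ ((p : ℝ) / ((p : ℝ) + ((∑ k ∈ Finset.range p, L k : ℕ) : ℝ)) - 1)) ^ r *
              mittagLefflerMoment ((p : ℝ) / ((p : ℝ) + ((∑ k ∈ Finset.range p, L k : ℕ) : ℝ))) β r)))
      atTop (𝓝 0) := by
  classical
  set ℓn := ∑ k ∈ Finset.range p, L k with hℓn
  set N : ℝ := (p:ℝ) + (ℓn:ℝ) with hNdef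
  set δ : ℝ := (p:ℝ)/N with hδdef
  set c₀ : ℝ := δ * (p:ℝ) ^ (δ - 1) with hc₀def
  set S := ggIndexSet L p with hSdef
  set s₀ := b₀ + w₀ with hs₀
  clear_value N δ c₀ S s₀
  -- basic positivity
  have hp' : (0:ℝ) < p := by exact_mod_cast hp
  have hℓ' : (1:ℝ) ≤ ℓn := by exact_mod_cast hl
  have hN : 0 < N := by rw [hNdef]; linarith
  have hδpos : 0 < δ := by rw [hδdef]; exact div_pos hp' hN
  have hδlt1 : δ < 1 := by rw [hδdef, div_lt_one hN, hNdef]; linarith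
  have hβ' : -δ < β := hβ
  have hβ1 : 0 < β + 1 := by linarith
  have hβδ : 0 < β/δ + 1 := by
    have h1 : 0 < (β + δ)/δ := div_pos (by linarith) hδpos
    have h2 : (β + δ)/δ = β/δ + 1 := by field_simp
    linarith [h2 ▸ h1]
  have hrpow : 0 < (p:ℝ) ^ (δ - 1) := Real.rpow_pos_of_pos hp' _
  have hc₀pos : 0 < c₀ := by rw [hc₀def]; exact mul_pos hδpos hrpow
  have hb' : (1:ℝ) ≤ (b₀:ℝ) := by exact_mod_cast hb
  have hs' : (1:ℝ) ≤ (s₀:ℝ) := by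
    have : 1 ≤ s₀ := by omega
    exact_mod_cast this
  -- log relations
  have hlogδ : Real.log δ = Real.log p - Real.log N := by
    rw [hδdef, Real.log_div hp'.ne' hN.ne']
  have hlogc₀ : Real.log c₀ = (Real.log p - Real.log N) + (δ - 1) * Real.log p := by
    rw [hc₀def, Real.log_mul hδpos.ne' hrpow.ne', Real.log_rpow hp', hlogδ]
  have hlogN : Real.log (1/N) = -Real.log N := by
    rw [one_div, Real.log_inv]
  have hcard : ((S.card : ℕ) : ℝ) = N - (p:ℝ) := by
    rw [hSdef, card_ggIndexSet L p hp, ← hℓn, hNdef]; ring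
  -- Gamma positivity
  have hG1 : ∀ r : ℕ, 0 < Real.Gamma ((b₀:ℝ) + r) := fun r =>
    Real.Gamma_pos_of_pos (by have := Nat.cast_nonneg (α := ℝ) r; linarith)
  have hGb : 0 < Real.Gamma (b₀:ℝ) := Real.Gamma_pos_of_pos (by linarith)
  have hGs : 0 < Real.Gamma ((s₀:ℕ):ℝ) := Real.Gamma_pos_of_pos (by linarith)
  have hG2 : ∀ r : ℕ, 0 < Real.Gamma (((s₀:ℕ):ℝ) + r) := fun r =>
    Real.Gamma_pos_of_pos (by have := Nat.cast_nonneg (α := ℝ) r; linarith)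
  have hG3 : ∀ r : ℕ, ∀ i : ℕ, 0 < Real.Gamma ((((s₀:ℕ):ℝ) + i + r)/N) := fun r i =>
    Real.Gamma_pos_of_pos (div_pos (by
      have h1 := Nat.cast_nonneg (α := ℝ) r
      have h2 := Nat.cast_nonneg (α := ℝ) i
      linarith) hN)
  have hG3' : ∀ i : ℕ, 0 < Real.Gamma ((((s₀:ℕ):ℝ) + i)/N) := fun i =>
    Real.Gamma_pos_of_pos (div_pos (by
      have h2 := Nat.cast_nonneg (α := ℝ) i
      linarith) hN)
  have hG4 : ∀ r : ℕ, 0 < Real.Gamma (β/δ + r + 1) := fun r =>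
    Real.Gamma_pos_of_pos (by have := Nat.cast_nonneg (α := ℝ) r; linarith)
  have hG5 : ∀ r : ℕ, 0 < Real.Gamma (β + δ * r + 1) := fun r =>
    Real.Gamma_pos_of_pos (by
      have h1 := Nat.cast_nonneg (α := ℝ) r
      nlinarith)
  have hGβ : 0 < Real.Gamma (β + 1) := Real.Gamma_pos_of_pos hβ1
  have hGβδ : 0 < Real.Gamma (β/δ + 1) := Real.Gamma_pos_of_pos hβδ
  -- positivity of composites
  have hEpos : ∀ r : ℕ, 0 < ggProdMoment L p b₀ w₀ r := by
    intro r
    rw [ggProdMoment, ← hℓn, ← hs₀, ← hNdef, ← hSdef]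
    apply mul_pos
    · exact div_pos (mul_pos (hG1 r) hGs) (mul_pos hGb (hG2 r))
    · exact Finset.prod_pos (fun i _ => div_pos (hG3 r i) (hG3' i))
  have hMLpos : ∀ r : ℕ, 0 < mittagLefflerMoment δ β r := by
    intro r
    rw [mittagLefflerMoment]
    exact div_pos (mul_pos hGβ (hG4 r)) (mul_pos hGβδ (hG5 r))
  -- log expansions
  have hlogE : ∀ r : ℕ, Real.log (ggProdMoment L p b₀ w₀ r)
      = Real.log (Real.Gamma ((b₀:ℝ)+r)) + Real.log (Real.Gamma ((s₀:ℕ):ℝ))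
        - Real.log (Real.Gamma (b₀:ℝ)) - Real.log (Real.Gamma (((s₀:ℕ):ℝ)+r))
        + ∑ i ∈ S, (Real.log (Real.Gamma ((((s₀:ℕ):ℝ)+i+r)/N))
            - Real.log (Real.Gamma ((((s₀:ℕ):ℝ)+i)/N))) := by
    intro r
    rw [ggProdMoment, ← hℓn, ← hs₀, ← hNdef, ← hSdef]
    rw [Real.log_mul (div_pos (mul_pos (hG1 r) hGs) (mul_pos hGb (hG2 r))).ne'
        (Finset.prod_ne_zero_iff.2 (fun i _ => (div_pos (hG3 r i) (hG3' i)).ne'))]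
    rw [Real.log_div (mul_pos (hG1 r) hGs).ne' (mul_pos hGb (hG2 r)).ne']
    rw [Real.log_mul (hG1 r).ne' hGs.ne', Real.log_mul hGb.ne' (hG2 r).ne']
    rw [Real.log_prod (fun i _ => (div_pos (hG3 r i) (hG3' i)).ne')]
    rw [Finset.sum_congr rfl (fun i _ => Real.log_div (hG3 r i).ne' (hG3' i).ne')]
    ring
  have hlogML : ∀ r : ℕ, Real.log (mittagLefflerMoment δ β r)
      = Real.log (Real.Gamma (β+1)) + Real.log (Real.Gamma (β/δ + r + 1))
        - Real.log (Real.Gamma (β/δ+1)) - Real.log (Real.Gamma (β + δ*r + 1)) := by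
    intro r
    rw [mittagLefflerMoment]
    rw [Real.log_div (mul_pos hGβ (hG4 r)).ne' (mul_pos hGβδ (hG5 r)).ne']
    rw [Real.log_mul hGβ.ne' (hG4 r).ne', Real.log_mul hGβδ.ne' (hG5 r).ne']
    ring
  have hlogpow : ∀ r : ℕ, Real.log (c₀ ^ r)
      = (r:ℝ) * ((Real.log p - Real.log N) + (δ - 1) * Real.log p) := by
    intro r
    rw [Real.log_pow, hlogc₀]
  -- the five error functions and the constant
  set C : ℝ := Real.log (Real.Gamma ((s₀:ℕ):ℝ)) - Real.log (Real.Gamma (b₀:ℝ))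
      - (∑ i ∈ S, Real.log (Real.Gamma ((((s₀:ℕ):ℝ)+i)/N)))
      - Real.log (Real.Gamma (β+1)) + Real.log (Real.Gamma (β/δ+1)) with hC
  set F : ℕ → ℝ := fun r =>
      (Real.log (Real.Gamma (1*(r:ℝ) + (b₀:ℝ))) - 1*(r:ℝ)*Real.log r - 1*(Real.log 1 - 1)*(r:ℝ))
      - (Real.log (Real.Gamma (1*(r:ℝ) + ((s₀:ℕ):ℝ))) - 1*(r:ℝ)*Real.log r - 1*(Real.log 1 - 1)*(r:ℝ))
      + (∑ i ∈ S, (Real.log (Real.Gamma ((1/N)*(r:ℝ) + (((s₀:ℕ):ℝ)+i)/N))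
          - (1/N)*(r:ℝ)*Real.log r - (1/N)*(Real.log (1/N) - 1)*(r:ℝ)))
      - (Real.log (Real.Gamma (1*(r:ℝ) + (β/δ + 1))) - 1*(r:ℝ)*Real.log r - 1*(Real.log 1 - 1)*(r:ℝ))
      + (Real.log (Real.Gamma (δ*(r:ℝ) + (β + 1))) - δ*(r:ℝ)*Real.log r - δ*(Real.log δ - 1)*(r:ℝ))
      + C with hF
  -- key identity
  have key : ∀ r : ℕ,
      Real.log (ggProdMoment L p b₀ w₀ r / (c₀ ^ r * mittagLefflerMoment δ β r)) = F r := by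
    intro r
    rw [Real.log_div (hEpos r).ne' (mul_pos (pow_pos hc₀pos r) (hMLpos r)).ne',
      Real.log_mul (pow_pos hc₀pos r).ne' (hMLpos r).ne']
    rw [hlogE r, hlogML r, hlogpow r, hF]
    simp only
    -- fix Gamma arguments
    rw [show (1:ℝ)*(r:ℝ) + (b₀:ℝ) = (b₀:ℝ) + r by ring]
    rw [show (1:ℝ)*(r:ℝ) + ((s₀:ℕ):ℝ) = ((s₀:ℕ):ℝ) + r by ring]
    rw [show (1:ℝ)*(r:ℝ) + (β/δ + 1) = β/δ + r + 1 by ring]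
    rw [show δ*(r:ℝ) + (β + 1) = β + δ*r + 1 by ring]
    have hsumarg : ∀ i : ℕ, (1/N)*(r:ℝ) + (((s₀:ℕ):ℝ)+i)/N = (((s₀:ℕ):ℝ)+i+r)/N :=
      fun i => by field_simp; ring
    simp only [hsumarg]
    -- split sums
    rw [Finset.sum_sub_distrib, Finset.sum_sub_distrib, Finset.sum_sub_distrib,
      Finset.sum_const, Finset.sum_const, nsmul_eq_mul, nsmul_eq_mul, hcard]
    rw [hC, hlogN, Real.log_one]
    have h1 : (N - (p:ℝ)) * (1/N) = 1 - δ := by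
      rw [hδdef]; field_simp
    linear_combination ((r:ℝ) * Real.log r - (Real.log N + 1) * (r:ℝ)) * h1
      + (δ * (r:ℝ)) * hlogδ
  -- tendsto of F r / r
  have hFtend : Tendsto (fun r : ℕ => F r / r) atTop (𝓝 0) := by
    have t1 := tendsto_gerr 1 (b₀:ℝ) one_pos
    have t2 := tendsto_gerr 1 ((s₀:ℕ):ℝ) one_pos
    have t3 : Tendsto (fun r : ℕ => ∑ i ∈ S,
        ((Real.log (Real.Gamma ((1/N)*(r:ℝ) + (((s₀:ℕ):ℝ)+i)/N))
          - (1/N)*(r:ℝ)*Real.log r - (1/N)*(Real.log (1/N) - 1)*(r:ℝ)) / r))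
        atTop (𝓝 0) := by
      have := tendsto_finset_sum S (fun i (_ : i ∈ S) =>
        tendsto_gerr (1/N) ((((s₀:ℕ):ℝ)+i)/N) (by positivity))
      simpa using this
    have t4 := tendsto_gerr 1 (β/δ + 1) one_pos
    have t5 := tendsto_gerr δ (β + 1) hδpos
    have tC : Tendsto (fun r : ℕ => C / r) atTop (𝓝 0) :=
      tendsto_const_nhds.div_atTop tendsto_natCast_atTop_atTop
    have hcomb := ((((t1.sub t2).add t3).sub t4).add t5).add tC
    simp only [sub_zero, add_zero, zero_add, zero_sub, neg_zero] at hcomb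
    apply hcomb.congr
    intro r
    rw [hF]
    simp only
    rw [← Finset.sum_div]
    ring
  -- conclude
  apply hFtend.congr
  intro r
  rw [key r, one_div, inv_mul_eq_div]
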